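/- For every α ∈ (0, ∞), the function h_α : [0,1] → ℝ defined by h_α(t) = Φ(t, αt) is concave on [0,1]. -/

import Mathlib

/-- The function `Φ : [0,1] × (0,∞) → ℝ` from the paper, extended by the given
formulas to all of `ℝ × ℝ`. Note that `Phi 0 0 = -1`, which matches the
interpretation `h_α(0) = -1` by continuity. -/
noncomputable def Phi (μ ρ : ℝ) : ℝ :=
  if μ = 0 then -1 / (1 + ρ) else (1 / μ) * Real.log (1 - μ / (1 + ρ))

lemma denom_pos {α s t : ℝ} (hα : 0 < α) (hs0 : 0 ≤ s) (hs1 : s ≤ 1)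
    (ht0 : 0 ≤ t) (ht1 : t ≤ 1) : 0 < 1 + (α - s) * t := by
  nlinarith [mul_nonneg (sub_nonneg.2 hs1) ht0, mul_nonneg hα.le ht0,
    mul_nonneg hα.le (sub_nonneg.2 ht1)]

lemma denom_continuousOn {α t : ℝ} (hα : 0 < α) (ht0 : 0 ≤ t) (ht1 : t ≤ 1) :
    ContinuousOn (fun s : ℝ => 1 / (1 + (α - s) * t)) (Set.Icc 0 1) := by
  apply ContinuousOn.div continuousOn_const
  · fun_prop
  · intro s hs
    exact (denom_pos hα hs.1 hs.2 ht0 ht1).ne' 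

lemma phi_eq (α : ℝ) (hα : 0 < α) {t : ℝ} (ht : t ∈ Set.Icc (0:ℝ) 1) :
    Phi t (α * t) = - ∫ s in (0:ℝ)..1, 1 / (1 + (α - s) * t) := by
  obtain ⟨ht0, ht1⟩ := ht
  rcases eq_or_lt_of_le ht0 with h0 | h0
  · simp [Phi, ← h0]
  -- t > 0
  have hne : t ≠ 0 := h0.ne'
  have key : ∀ s ∈ Set.uIcc (0:ℝ) 1,
      HasDerivAt (fun s : ℝ => -(1/t) * Real.log (1 + (α - s) * t))
        (1 / (1 + (α - s) * t)) s := by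
    intro s hs
    rw [Set.uIcc_of_le (by norm_num : (0:ℝ) ≤ 1)] at hs
    have hd : 0 < 1 + (α - s) * t := denom_pos hα hs.1 hs.2 ht0 ht1
    have h1 : HasDerivAt (fun s : ℝ => 1 + (α - s) * t) (-t) s := by
      have : HasDerivAt (fun s : ℝ => 1 + (α - s) * t) (0 + (0 - 1) * t) s := by
        exact (hasDerivAt_const s (1:ℝ)).add
          (((hasDerivAt_const s α).sub (hasDerivAt_id s)).mul_const t)
      simpa using this
    have h2 := (h1.log hd.ne').const_mul (-(1/t))
    refine h2.congr_deriv ?_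
    rw [neg_div, mul_neg, neg_mul, neg_neg, ← mul_div_assoc, one_div_mul_cancel hne]
  have hint := intervalIntegral.integral_eq_sub_of_hasDerivAt key
    ((denom_continuousOn hα ht0 ht1).intervalIntegrable_of_Icc (by norm_num))
  rw [hint]
  have hq : 0 < 1 + α * t := by nlinarith
  have hp : 0 < 1 + (α - 1) * t := denom_pos hα zero_le_one le_rfl ht0 ht1
  have harg : 1 - t / (1 + α * t) = (1 + (α - 1) * t) / (1 + α * t) := by
    field_simp; ring
  rw [Phi, if_neg hne, harg, Real.log_div hp.ne' hq.ne']
  simp only [sub_zero, mul_zero]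
  ring

lemma one_div_convex {p q a : ℝ} (hp : 0 < p) (hq : 0 < q) (ha : 0 ≤ a) (ha1 : a ≤ 1) :
    1 / (a * p + (1 - a) * q) ≤ a * (1 / p) + (1 - a) * (1 / q) := by
  have hpq : 0 < a * p + (1 - a) * q := by
    nlinarith [mul_pos hp hq, mul_nonneg ha hp.le, mul_nonneg (sub_nonneg.2 ha1) hq.le]
  rw [div_le_iff₀ hpq]
  have e1 : (a * (1 / p) + (1 - a) * (1 / q)) * (a * p + (1 - a) * q)
      = 1 + a * (1 - a) * (p - q) ^ 2 / (p * q) := by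
    field_simp
    ring
  rw [e1]
  have : 0 ≤ a * (1 - a) * (p - q) ^ 2 / (p * q) :=
    div_nonneg (mul_nonneg (mul_nonneg ha (sub_nonneg.2 ha1)) (sq_nonneg _))
      (mul_pos hp hq).le
  linarith

theorem Phi_t_alpha_t_concave (α : ℝ) (hα : α ∈ Set.Ioi (0:ℝ)) :
    ConcaveOn ℝ (Set.Icc (0:ℝ) 1) (fun t => Phi t (α * t)) := by
  have hα' : (0:ℝ) < α := hα
  refine ⟨convex_Icc 0 1, ?_⟩
  intro x hx y hy a b ha hb hab
  have hb1 : b = 1 - a := by linarith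
  subst hb1
  have ha1 : a ≤ 1 := by linarith
  have hz : a • x + (1 - a) • y ∈ Set.Icc (0:ℝ) 1 := (convex_Icc 0 1) hx hy ha hb hab
  simp only [smul_eq_mul] at *
  rw [phi_eq α hα' hx, phi_eq α hα' hy, phi_eq α hα' hz]
  have hix : IntervalIntegrable (fun s => 1 / (1 + (α - s) * x)) MeasureTheory.volume 0 1 :=
    (denom_continuousOn hα' hx.1 hx.2).intervalIntegrable_of_Icc (by norm_num)
  have hiy : IntervalIntegrable (fun s => 1 / (1 + (α - s) * y)) MeasureTheory.volume 0 1 :=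
    (denom_continuousOn hα' hy.1 hy.2).intervalIntegrable_of_Icc (by norm_num)
  have hiz : IntervalIntegrable (fun s => 1 / (1 + (α - s) * (a * x + (1 - a) * y)))
      MeasureTheory.volume 0 1 :=
    (denom_continuousOn hα' hz.1 hz.2).intervalIntegrable_of_Icc (by norm_num)
  have hmono : (∫ s in (0:ℝ)..1, 1 / (1 + (α - s) * (a * x + (1 - a) * y)))
      ≤ ∫ s in (0:ℝ)..1,
        (a * (1 / (1 + (α - s) * x)) + (1 - a) * (1 / (1 + (α - s) * y))) := by
    apply intervalIntegral.integral_mono_on (by norm_num) hiz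
      ((hix.const_mul a).add (hiy.const_mul (1 - a)))
    intro s hs
    have hp : 0 < 1 + (α - s) * x := denom_pos hα' hs.1 hs.2 hx.1 hx.2
    have hq : 0 < 1 + (α - s) * y := denom_pos hα' hs.1 hs.2 hy.1 hy.2
    have hzz : 1 + (α - s) * (a * x + (1 - a) * y)
        = a * (1 + (α - s) * x) + (1 - a) * (1 + (α - s) * y) := by ring
    rw [hzz]
    exact one_div_convex hp hq ha ha1
  have hsum : (∫ s in (0:ℝ)..1,
        (a * (1 / (1 + (α - s) * x)) + (1 - a) * (1 / (1 + (α - s) * y))))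
      = a * (∫ s in (0:ℝ)..1, 1 / (1 + (α - s) * x))
        + (1 - a) * (∫ s in (0:ℝ)..1, 1 / (1 + (α - s) * y)) := by
    rw [intervalIntegral.integral_add (hix.const_mul a) (hiy.const_mul (1 - a)),
      intervalIntegral.integral_const_mul, intervalIntegral.integral_const_mul]
  rw [hsum] at hmono
  linarith
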